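/- arXiv:0706.2580 — 8 statements merged into one kernel-verified Lean document; each statement's English description precedes it below -/
import Mathlib

section
/- Let A, B be real 2×2 matrices, each with no real eigenvalues and with positive lower-left entry a₂₁ > 0, b₂₁ > 0. Then the product AB has no eigenvalue in [0, ∞); equivalently, for every nonzero v ∈ ℝ², ABv is never a nonnegative real scalar multiple of v. -/
lemma cross_pos (A : Matrix (Fin 2) (Fin 2) ℝ)
    (hA : A.trace ^ 2 < 4 * A.det) (hA21 : 0 < A 1 0)
    (v : Fin 2 → ℝ) (hv : v ≠ 0) :
    0 < v 0 * (A.mulVec v) 1 - v 1 * (A.mulVec v) 0 := by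
  have hdet : A.det = A 0 0 * A 1 1 - A 0 1 * A 1 0 := Matrix.det_fin_two A
  have htr : A.trace = A 0 0 + A 1 1 := Matrix.trace_fin_two A
  have h0 : (A.mulVec v) 0 = A 0 0 * v 0 + A 0 1 * v 1 := by
    simp [Matrix.mulVec, dotProduct, Fin.sum_univ_two]
  have h1 : (A.mulVec v) 1 = A 1 0 * v 0 + A 1 1 * v 1 := by
    simp [Matrix.mulVec, dotProduct, Fin.sum_univ_two]
  have hv' : v 0 ≠ 0 ∨ v 1 ≠ 0 := by
    by_contra h
    push_neg at h
    apply hv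
    funext i
    fin_cases i <;> simp [h.1, h.2]
  rw [hdet, htr] at hA
  rw [h0, h1]
  rcases eq_or_ne (v 1) 0 with h | h
  · have h0' : v 0 ≠ 0 := by
      rcases hv' with h' | h'
      · exact h'
      · exact absurd h h'
    rw [h]
    nlinarith [mul_pos hA21 (sq_pos_of_ne_zero h0')]
  · nlinarith [sq_nonneg (2 * A 1 0 * v 0 + (A 1 1 - A 0 0) * v 1),
      sq_pos_of_ne_zero h, mul_pos hA21 (sq_pos_of_ne_zero h)]

/-- If `A` and `B` each have no real eigenvalues and positive lower-left entries, then
`AB` has no eigenvalue in `[0, ∞)`: for every nonzero `v`, `ABv` is never a nonnegative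
real multiple of `v`. -/
theorem stmt5 (A B : Matrix (Fin 2) (Fin 2) ℝ)
    (hA : A.trace ^ 2 < 4 * A.det) (hB : B.trace ^ 2 < 4 * B.det)
    (hA21 : 0 < A 1 0) (hB21 : 0 < B 1 0) :
    ∀ v : Fin 2 → ℝ, v ≠ 0 → ∀ μ : ℝ, 0 ≤ μ → (A * B).mulVec v ≠ μ • v := by
  intro v hv μ hμ heq
  set w := B.mulVec v with hw_def
  have h1 := cross_pos B hB hB21 v hv
  have hw : w ≠ 0 := by
    intro h
    rw [← hw_def] at h1
    rw [h] at h1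
    simp at h1
  have h2 := cross_pos A hA hA21 w hw
  have hAw : A.mulVec w = μ • v := by
    rw [hw_def, Matrix.mulVec_mulVec, heq]
  rw [hAw] at h2
  simp only [Pi.smul_apply, smul_eq_mul] at h2
  nlinarith [mul_nonneg hμ h1.le]
end

section
/- Let H : ℝ² → ℝ be a differentiable function such that ∂H/∂x is never zero. Then ∂H/∂x is either strictly positive on all of ℝ² or strictly negative on all of ℝ². -/
/-- If `H : ℝ² → ℝ` is differentiable and `∂H/∂x` never vanishes, then `∂H/∂x` has
constant sign on all of `ℝ²`. -/
theorem stmt6 (H : ℝ × ℝ → ℝ) (hH : Differentiable ℝ H)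
    (h : ∀ p : ℝ × ℝ, fderiv ℝ H p (1, 0) ≠ 0) :
    (∀ p : ℝ × ℝ, 0 < fderiv ℝ H p (1, 0)) ∨
    (∀ p : ℝ × ℝ, fderiv ℝ H p (1, 0) < 0) := by
  set g : ℝ → ℝ → ℝ := fun x y => fderiv ℝ H (x, y) (1, 0) with hg
  have hd : ∀ y x, HasDerivAt (fun x => H (x, y)) (g x y) x := by
    intro y x
    have h1 : HasDerivAt (fun x : ℝ => (x, y)) ((1 : ℝ), (0 : ℝ)) x :=
      HasDerivAt.prodMk (hasDerivAt_id x) (hasDerivAt_const x y)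
    exact (hH (x, y)).hasFDerivAt.comp_hasDerivAt x h1
  -- On each horizontal line the sign is constant (Darboux)
  have hline : ∀ y : ℝ, (∀ x, g x y < 0) ∨ (∀ x, 0 < g x y) := by
    intro y
    have := hasDerivWithinAt_forall_lt_or_forall_gt_of_forall_ne (f := fun x => H (x, y))
      (f' := fun x => g x y) (s := Set.univ) convex_univ
      (fun x _ => (hd y x).hasDerivWithinAt) (m := 0) (fun x _ => h (x, y))
    rcases this with h1 | h1
    · exact Or.inl fun x => h1 x (Set.mem_univ x)
    · exact Or.inr fun x => h1 x (Set.mem_univ x)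
  -- strict monotonicity on lines
  have hmono : ∀ y : ℝ, (∀ x, 0 < g x y) → StrictMono (fun x => H (x, y)) := by
    intro y hy
    exact strictMono_of_deriv_pos fun x => by rw [(hd y x).deriv]; exact hy x
  have hanti : ∀ y : ℝ, (∀ x, g x y < 0) → StrictAnti (fun x => H (x, y)) := by
    intro y hy
    exact strictAnti_of_deriv_neg fun x => by rw [(hd y x).deriv]; exact hy x
  by_contra hcon
  push_neg at hcon
  obtain ⟨⟨p, hp⟩, ⟨q, hq⟩⟩ := hcon
  -- g at p is ≤ 0, hence line of p.2 is all negative; line of q.2 is all positive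
  have hpneg : ∀ x, g x p.2 < 0 := by
    rcases hline p.2 with h1 | h1
    · exact h1
    · exact absurd (h1 p.1) (by simpa [hg] using hp)
  have hqpos : ∀ x, 0 < g x q.2 := by
    rcases hline q.2 with h1 | h1
    · exact absurd (h1 q.1) (by have := hq; simp only [hg] at *; linarith)
    · exact h1
  -- ψ y = H (1, y) - H (0, y)
  set ψ : ℝ → ℝ := fun y => H (1, y) - H (0, y) with hψ
  have hcont : Continuous ψ := by
    have : Continuous H := hH.continuous
    fun_prop
  have hψp : ψ p.2 < 0 := by
    have := (hanti p.2 hpneg) (show (0:ℝ) < 1 by norm_num)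
    simpa [hψ] using this
  have hψq : 0 < ψ q.2 := by
    have := (hmono q.2 hqpos) (show (0:ℝ) < 1 by norm_num)
    simpa [hψ] using this
  -- IVT gives y* with ψ y* = 0
  have h0 : (0 : ℝ) ∈ Set.uIcc (ψ p.2) (ψ q.2) := Set.mem_uIcc.2 (Or.inl ⟨le_of_lt hψp, le_of_lt hψq⟩)
  obtain ⟨y, -, hy0⟩ := intermediate_value_uIcc hcont.continuousOn h0
  -- contradiction: on line y, H is strictly monotone, so ψ y ≠ 0
  rcases hline y with h1 | h1
  · have h2 := (hanti y h1) (show (0:ℝ) < 1 by norm_num)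
    simp only [hψ] at hy0; linarith
  · have h2 := (hmono y h1) (show (0:ℝ) < 1 by norm_num)
    simp only [hψ] at hy0; linarith
end

section
/- Let H : U → ℝ be differentiable on an open connected subset U of ℝ² such that the partial derivative ∂H/∂x is never zero on U. Then ∂H/∂x is either strictly positive on all of U or strictly negative on all of U. -/
open Set Metric

/-- The horizontal partial derivative is the derivative of the horizontal slice. -/
lemma slice_hasDerivAt {H : ℝ × ℝ → ℝ} {x y : ℝ} (hH : DifferentiableAt ℝ H (x, y)) :
    HasDerivAt (fun t => H (t, y)) (fderiv ℝ H (x, y) (1, 0)) x := by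
  have h1 : HasDerivAt (fun t : ℝ => (t, y)) ((1 : ℝ), (0 : ℝ)) x :=
    HasDerivAt.prodMk (hasDerivAt_id x) (hasDerivAt_const x y)
  exact hH.hasFDerivAt.comp_hasDerivAt x h1

/-- Positivity of the horizontal partial derivative propagates to a neighborhood. -/
lemma key_pos (U : Set (ℝ × ℝ)) (hU : IsOpen U)
    (H : ℝ × ℝ → ℝ) (hH : ∀ p ∈ U, DifferentiableAt ℝ H p)
    (h : ∀ p ∈ U, fderiv ℝ H p (1, 0) ≠ 0)
    (p₀ : ℝ × ℝ) (hp₀ : p₀ ∈ U) (hpos : 0 < fderiv ℝ H p₀ (1, 0)) :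
    ∃ ε > 0, Metric.ball p₀ ε ⊆ U ∧ ∀ q ∈ Metric.ball p₀ ε, 0 < fderiv ℝ H q (1, 0) := by
  obtain ⟨a, b⟩ := p₀
  set D : ℝ × ℝ → ℝ := fun p => fderiv ℝ H p (1, 0) with hDdef
  obtain ⟨r, hr, hball⟩ := Metric.isOpen_iff.1 hU (a, b) hp₀
  set δ := r / 2 with hδdef
  have hδ : 0 < δ := by positivity
  -- points of the square are in U
  have hsq : ∀ x y : ℝ, |x - a| ≤ δ → |y - b| ≤ δ → (x, y) ∈ U := by
    intro x y hx hy
    apply hball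
    rw [Metric.mem_ball, Prod.dist_eq, Real.dist_eq, Real.dist_eq]
    exact max_lt (lt_of_le_of_lt hx (by linarith)) (lt_of_le_of_lt hy (by linarith))
  -- sign propagation along a horizontal segment (Darboux)
  have sgn : ∀ (y : ℝ) (s : Set ℝ), s.OrdConnected → (∀ x ∈ s, (x, y) ∈ U) →
      ∀ c ∈ s, ∀ x ∈ s, 0 < D (c, y) → 0 < D (x, y) := by
    intro y s hs hmem c hc x hx hcpos
    by_contra hxneg
    have hxlt : D (x, y) < 0 :=
      lt_of_le_of_ne (not_lt.1 hxneg) (h (x, y) (hmem x hx))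
    have himg : Set.OrdConnected ((fun t => D (t, y)) '' s) := by
      apply hs.image_hasDerivWithinAt (f := fun t => H (t, y))
      intro t ht
      exact (slice_hasDerivAt (hH _ (hmem t ht))).hasDerivWithinAt
    have h0 : (0 : ℝ) ∈ (fun t => D (t, y)) '' s := by
      have := himg.out (Set.mem_image_of_mem _ hx) (Set.mem_image_of_mem _ hc)
      exact this ⟨hxlt.le, hcpos.le⟩
    obtain ⟨z, hz, hz0⟩ := h0
    exact h (z, y) (hmem z hz) hz0
  -- positivity and MVT along a horizontal segment at height y near b
  have hslope : ∀ y : ℝ, |y - b| ≤ δ → 0 < H (a + δ, y) - H (a - δ, y) →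
      ∀ x ∈ Icc (a - δ) (a + δ), 0 < D (x, y) := by
    intro y hy hpos' x hx
    have hmem : ∀ x' ∈ Icc (a - δ) (a + δ), (x', y) ∈ U := by
      intro x' hx'
      exact hsq x' y (abs_le.2 ⟨by linarith [hx'.1], by linarith [hx'.2]⟩) hy
    have hcont : ContinuousOn (fun t => H (t, y)) (Icc (a - δ) (a + δ)) := fun t ht =>
      (slice_hasDerivAt (hH _ (hmem t ht))).continuousAt.continuousWithinAt
    obtain ⟨c, hc, hceq⟩ := exists_hasDerivAt_eq_slope (fun t => H (t, y))
      (fun t => D (t, y)) (by linarith : a - δ < a + δ) hcont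
      (fun t ht => slice_hasDerivAt (hH _ (hmem t (Ioo_subset_Icc_self ht))))
    have hcpos : 0 < D (c, y) := by
      rw [hceq]; apply div_pos hpos'; linarith
    exact sgn y (Icc (a - δ) (a + δ)) Set.ordConnected_Icc hmem c
      (Ioo_subset_Icc_self hc) x hx hcpos
  -- at height b the slope is positive
  have hb0 : 0 < H (a + δ, b) - H (a - δ, b) := by
    have hmem : ∀ x' ∈ Icc (a - δ) (a + δ), (x', b) ∈ U := by
      intro x' hx'
      exact hsq x' b (abs_le.2 ⟨by linarith [hx'.1], by linarith [hx'.2]⟩)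
        (by simp [abs_of_nonneg, hδ.le])
    have hDb : ∀ x ∈ Icc (a - δ) (a + δ), 0 < D (x, b) := by
      intro x hx
      exact sgn b _ Set.ordConnected_Icc hmem a
        (by constructor <;> linarith) x hx hpos
    have hcont : ContinuousOn (fun t => H (t, b)) (Icc (a - δ) (a + δ)) := fun t ht =>
      (slice_hasDerivAt (hH _ (hmem t ht))).continuousAt.continuousWithinAt
    obtain ⟨c, hc, hceq⟩ := exists_hasDerivAt_eq_slope (fun t => H (t, b))
      (fun t => D (t, b)) (by linarith : a - δ < a + δ) hcont
      (fun t ht => slice_hasDerivAt (hH _ (hmem t (Ioo_subset_Icc_self ht))))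
    have := hDb c (Ioo_subset_Icc_self hc)
    rw [hceq] at this
    rcases div_pos_iff.1 this with ⟨h1, _⟩ | ⟨_, h2⟩
    · linarith
    · linarith
  -- continuity of the slope difference in y
  have hφ : ContinuousAt (fun y => H (a + δ, y) - H (a - δ, y)) b := by
    have h1 : ContinuousAt (fun y : ℝ => H (a + δ, y)) b :=
      ((hH _ (hsq (a + δ) b (by simp [abs_of_nonneg hδ.le]) (by simp [hδ.le]))).continuousAt).comp
        ((continuous_const.prodMk continuous_id).continuousAt)
    have h2 : ContinuousAt (fun y : ℝ => H (a - δ, y)) b :=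
      ((hH _ (hsq (a - δ) b (by simp [abs_of_nonpos, hδ.le]) (by simp [hδ.le]))).continuousAt).comp
        ((continuous_const.prodMk continuous_id).continuousAt)
    exact h1.sub h2
  have hev : ∀ᶠ y in nhds b, 0 < H (a + δ, y) - H (a - δ, y) :=
    continuousAt_const.eventually_lt hφ (by simpa using hb0)
  obtain ⟨ε', hε', hε'prop⟩ := Metric.eventually_nhds_iff.1 hev
  refine ⟨min ε' δ, lt_min hε' hδ, ?_, ?_⟩
  · intro q hq
    rw [Metric.mem_ball, Prod.dist_eq, max_lt_iff] at hq
    exact hsq q.1 q.2 (le_of_lt (lt_of_lt_of_le hq.1 (le_trans (min_le_right _ _) le_rfl)))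
      (le_of_lt (lt_of_lt_of_le hq.2 (min_le_right _ _)))
  · rintro ⟨qx, qy⟩ hq
    rw [Metric.mem_ball, Prod.dist_eq, max_lt_iff, Real.dist_eq, Real.dist_eq] at hq
    have hqx : |qx - a| ≤ δ := le_of_lt (lt_of_lt_of_le hq.1 (min_le_right _ _))
    have hqy : |qy - b| ≤ δ := le_of_lt (lt_of_lt_of_le hq.2 (min_le_right _ _))
    have hqy' : dist qy b < ε' := lt_of_lt_of_le hq.2 (min_le_left _ _)
    exact hslope qy hqy (hε'prop hqy') qx
      (abs_le.1 hqx |> fun hh => ⟨by linarith [hh.1], by linarith [hh.2]⟩)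

/-- On an open connected `U ⊆ ℝ²`, if `H` is differentiable on `U` and `∂H/∂x` never
vanishes on `U`, then `∂H/∂x` has constant sign on `U`. -/
theorem stmt7 (U : Set (ℝ × ℝ)) (hU : IsOpen U) (hconn : IsConnected U)
    (H : ℝ × ℝ → ℝ) (hH : ∀ p ∈ U, DifferentiableAt ℝ H p)
    (h : ∀ p ∈ U, fderiv ℝ H p (1, 0) ≠ 0) :
    (∀ p ∈ U, 0 < fderiv ℝ H p (1, 0)) ∨
    (∀ p ∈ U, fderiv ℝ H p (1, 0) < 0) := by
  -- the negative version of the key lemma, via -H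
  have hHneg : ∀ p ∈ U, DifferentiableAt ℝ (fun q => -H q) p := fun p hp => (hH p hp).neg
  have hneg_fderiv : ∀ p : ℝ × ℝ, fderiv ℝ (fun q => -H q) p (1, 0) = -(fderiv ℝ H p (1, 0)) := by
    intro p; rw [fderiv_fun_neg]; simp
  have hneg : ∀ p ∈ U, fderiv ℝ (fun q => -H q) p (1, 0) ≠ 0 := by
    intro p hp; rw [hneg_fderiv]; simpa using h p hp
  have key_neg : ∀ p₀ ∈ U, fderiv ℝ H p₀ (1, 0) < 0 →
      ∃ ε > 0, Metric.ball p₀ ε ⊆ U ∧ ∀ q ∈ Metric.ball p₀ ε, fderiv ℝ H q (1, 0) < 0 := by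
    intro p₀ hp₀ hlt
    obtain ⟨ε, hε, hsub, hq⟩ := key_pos U hU (fun q => -H q) hHneg hneg p₀ hp₀
      (by rw [hneg_fderiv]; linarith)
    refine ⟨ε, hε, hsub, fun q hq' => ?_⟩
    have := hq q hq'
    rw [hneg_fderiv] at this
    linarith
  -- open sets
  set A : Set (ℝ × ℝ) := {p | p ∈ U ∧ 0 < fderiv ℝ H p (1, 0)} with hA
  set B : Set (ℝ × ℝ) := {p | p ∈ U ∧ fderiv ℝ H p (1, 0) < 0} with hB
  have hAopen : IsOpen A := by
    rw [Metric.isOpen_iff]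
    rintro p ⟨hp, hppos⟩
    obtain ⟨ε, hε, hsub, hq⟩ := key_pos U hU H hH h p hp hppos
    exact ⟨ε, hε, fun q hq' => ⟨hsub hq', hq q hq'⟩⟩
  have hBopen : IsOpen B := by
    rw [Metric.isOpen_iff]
    rintro p ⟨hp, hpneg⟩
    obtain ⟨ε, hε, hsub, hq⟩ := key_neg p hp hpneg
    exact ⟨ε, hε, fun q hq' => ⟨hsub hq', hq q hq'⟩⟩
  have hdisj : Disjoint A B := by
    rw [Set.disjoint_iff]
    rintro p ⟨⟨_, h1⟩, ⟨_, h2⟩⟩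
    linarith
  have hUAB : U ⊆ A ∪ B := by
    intro p hp
    rcases lt_or_gt_of_ne (h p hp) with hlt | hgt
    · exact Or.inr ⟨hp, hlt⟩
    · exact Or.inl ⟨hp, hgt⟩
  rcases hconn.isPreconnected.subset_or_subset hAopen hBopen hdisj hUAB with hs | hs
  · exact Or.inl fun p hp => (hs hp).2
  · exact Or.inr fun p hp => (hs hp).2
end

section
/- Let F : ℝ² → ℝ² be a differentiable (not necessarily C¹) map such that for every p ∈ ℝ², the derivative DF_p has no real eigenvalues. Then F² = F ∘ F has at most one fixed point. -/
/-- If a vector `w` in the plane has zero cross product with a nonzero vector `v`,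
then `w` is a scalar multiple of `v`. -/
lemma cross_zero_parallel {v w : ℝ × ℝ} (hv : v ≠ 0)
    (h : v.1 * w.2 - v.2 * w.1 = 0) : ∃ μ : ℝ, w = μ • v := by
  rcases eq_or_ne v.1 0 with h1 | h1
  · have h2 : v.2 ≠ 0 := by
      intro h2
      exact hv (Prod.ext h1 h2)
    refine ⟨w.2 / v.2, ?_⟩
    have hw1 : w.1 = 0 := by
      have : v.2 * w.1 = 0 := by rw [h1] at h; linarith
      exact (mul_eq_zero.1 this).resolve_left h2
    have : (w.2 / v.2) • v = (w.2 / v.2 * v.1, w.2 / v.2 * v.2) := rfl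
    rw [this, h1, mul_zero, div_mul_cancel₀ _ h2]
    exact Prod.ext hw1 rfl
  · refine ⟨w.1 / v.1, ?_⟩
    have hw2 : w.2 = v.2 * w.1 / v.1 := by field_simp; linarith
    have : (w.1 / v.1) • v = (w.1 / v.1 * v.1, w.1 / v.1 * v.2) := rfl
    rw [this, div_mul_cancel₀ _ h1]
    refine Prod.ext rfl ?_
    rw [hw2]; ring

/-- Derivative of the cross-product test function along a line. -/
lemma hasDerivAt_psi (F : ℝ × ℝ → ℝ × ℝ) (hF : Differentiable ℝ F)
    (a v : ℝ × ℝ) (t : ℝ) :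
    HasDerivAt
      (fun s : ℝ => v.1 * (F (a + s • v) - (a + s • v)).2
        - v.2 * (F (a + s • v) - (a + s • v)).1)
      (v.1 * ((fderiv ℝ F (a + t • v) v).2 - v.2)
        - v.2 * ((fderiv ℝ F (a + t • v) v).1 - v.1)) t := by
  have hγ : HasDerivAt (fun s : ℝ => a + s • v) v t := by
    simpa using ((hasDerivAt_id t).smul_const v).const_add a
  have hFγ : HasDerivAt (fun s : ℝ => F (a + s • v)) (fderiv ℝ F (a + t • v) v) t :=
    (hF (a + t • v)).hasFDerivAt.comp_hasDerivAt t hγ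
  have hd : HasDerivAt (fun s : ℝ => F (a + s • v) - (a + s • v))
      (fderiv ℝ F (a + t • v) v - v) t := hFγ.sub hγ
  have h1 : HasDerivAt (fun s : ℝ => (F (a + s • v) - (a + s • v)).1)
      ((fderiv ℝ F (a + t • v) v - v).1) t :=
    (ContinuousLinearMap.fst ℝ ℝ ℝ).hasFDerivAt.comp_hasDerivAt t hd
  have h2 : HasDerivAt (fun s : ℝ => (F (a + s • v) - (a + s • v)).2)
      ((fderiv ℝ F (a + t • v) v - v).2) t :=
    (ContinuousLinearMap.snd ℝ ℝ ℝ).hasFDerivAt.comp_hasDerivAt t hd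
  exact (h2.const_mul v.1).sub (h1.const_mul v.2)

/-- Key Rolle-type contradiction: if `F a - a` and `F b - b` are both parallel to
`b - a` with `a ≠ b`, we contradict the no-real-eigenvalue hypothesis. -/
lemma key_contradiction (F : ℝ × ℝ → ℝ × ℝ) (hF : Differentiable ℝ F)
    (h : ∀ p : ℝ × ℝ, ∀ μ : ℝ, ∀ v : ℝ × ℝ, v ≠ 0 → fderiv ℝ F p v ≠ μ • v)
    {a b : ℝ × ℝ} (hab : a ≠ b)
    (h0 : (b - a).1 * (F a - a).2 - (b - a).2 * (F a - a).1 = 0)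
    (h1 : (b - a).1 * (F b - b).2 - (b - a).2 * (F b - b).1 = 0) : False := by
  set v := b - a with hvdef
  have hv : v ≠ 0 := sub_ne_zero.2 (Ne.symm hab)
  set ψ : ℝ → ℝ := fun s =>
    v.1 * (F (a + s • v) - (a + s • v)).2 - v.2 * (F (a + s • v) - (a + s • v)).1 with hψdef
  have hψ : ∀ t : ℝ, HasDerivAt ψ
      (v.1 * ((fderiv ℝ F (a + t • v) v).2 - v.2)
        - v.2 * ((fderiv ℝ F (a + t • v) v).1 - v.1)) t :=
    fun t => hasDerivAt_psi F hF a v t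
  have hψ0 : ψ 0 = 0 := by
    have : a + (0 : ℝ) • v = a := by simp
    simp only [hψdef, this]
    exact h0
  have hψ1 : ψ 1 = 0 := by
    have hb : a + (1 : ℝ) • v = b := by simp [hvdef]
    simp only [hψdef, hb]
    exact h1
  have hcont : ContinuousOn ψ (Set.Icc 0 1) :=
    (continuous_iff_continuousAt.2 fun t => (hψ t).continuousAt).continuousOn
  obtain ⟨c, _, hc⟩ := exists_deriv_eq_zero (by norm_num : (0:ℝ) < 1) hcont (hψ0.trans hψ1.symm)
  have hderiv := (hψ c).deriv
  rw [hc] at hderiv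
  set w := fderiv ℝ F (a + c • v) v with hw
  have hcross : v.1 * w.2 - v.2 * w.1 = 0 := by nlinarith [hderiv]
  obtain ⟨μ, hμ⟩ := cross_zero_parallel hv hcross
  exact h (a + c • v) μ v hv hμ

/-- If `F : ℝ² → ℝ²` is differentiable and no derivative `DF_p` has a real eigenvalue,
then `F ∘ F` has at most one fixed point. -/
theorem stmt9 (F : ℝ × ℝ → ℝ × ℝ) (hF : Differentiable ℝ F)
    (h : ∀ p : ℝ × ℝ, ∀ μ : ℝ, ∀ v : ℝ × ℝ, v ≠ 0 → fderiv ℝ F p v ≠ μ • v) :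
    ∀ p q : ℝ × ℝ, F (F p) = p → F (F q) = q → p = q := by
  -- Step 1: every 2-periodic point is a fixed point.
  have fix : ∀ r : ℝ × ℝ, F (F r) = r → F r = r := by
    intro r hr
    by_contra hne
    refine key_contradiction F hF h (a := r) (b := F r)
      (fun e => hne e.symm) ?_ ?_
    · simp only [Prod.fst_sub, Prod.snd_sub]; ring
    · rw [hr]; simp only [Prod.fst_sub, Prod.snd_sub, Prod.fst_neg, Prod.snd_neg]; ring
  -- Step 2: F has at most one fixed point.
  intro p q hp hq
  have hp' := fix p hp
  have hq' := fix q hq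
  by_contra hpq
  refine key_contradiction F hF h (a := p) (b := q) hpq ?_ ?_
  · simp [hp']
  · simp [hq']
end

section
/- If F : ℝ² → ℝ² is a differentiable map with DF_p having no real eigenvalues for all p, then Spec(F²) ∩ [0, ∞) = ∅, i.e. for every p the derivative D(F²)_p = DF_{F(p)} · DF_p has no nonnegative real eigenvalue. -/
open Set

private def cr (v w : ℝ × ℝ) : ℝ := v.1 * w.2 - v.2 * w.1

private lemma cr_ne_zero (F : ℝ × ℝ → ℝ × ℝ)
    (h : ∀ p : ℝ × ℝ, ∀ μ : ℝ, ∀ v : ℝ × ℝ, v ≠ 0 → fderiv ℝ F p v ≠ μ • v)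
    (q : ℝ × ℝ) {v : ℝ × ℝ} (hv : v ≠ 0) : cr v (fderiv ℝ F q v) ≠ 0 := by
  intro hc
  set w := fderiv ℝ F q v with hw
  have hc' : v.1 * w.2 - v.2 * w.1 = 0 := hc
  have hvv : v.1 ≠ 0 ∨ v.2 ≠ 0 := by
    by_contra hcon
    push_neg at hcon
    exact hv (Prod.ext hcon.1 hcon.2)
  have hex : ∃ μ : ℝ, w = μ • v := by
    rcases hvv with h1 | h2
    · refine ⟨w.1 / v.1, Prod.ext ?_ ?_⟩
      · simp; field_simp
      · simp; field_simp; nlinarith [hc']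
    · refine ⟨w.2 / v.2, Prod.ext ?_ ?_⟩
      · simp; field_simp; nlinarith [hc']
      · simp; field_simp
  obtain ⟨μ, hμ⟩ := hex
  exact h q μ v hv hμ

private lemma line_sign (F : ℝ × ℝ → ℝ × ℝ) (hF : Differentiable ℝ F)
    (h : ∀ p : ℝ × ℝ, ∀ μ : ℝ, ∀ v : ℝ × ℝ, v ≠ 0 → fderiv ℝ F p v ≠ μ • v)
    (q : ℝ × ℝ) {v : ℝ × ℝ} (hv : v ≠ 0) (t : ℝ) :
    0 < cr v (fderiv ℝ F q v) * cr v (fderiv ℝ F (q + t • v) v) := by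
  set D := fun x => fderiv ℝ F x with hD
  have hder : ∀ s : ℝ, HasDerivAt (fun s : ℝ => cr v (F (q + s • v)))
      (cr v (D (q + s • v) v)) s := by
    intro s
    have hline : HasDerivAt (fun s : ℝ => q + s • v) v s := by
      simpa using ((hasDerivAt_id s).smul_const v).const_add q
    have hFc : HasDerivAt (fun s : ℝ => F (q + s • v)) (D (q + s • v) v) s :=
      (hF (q + s • v)).hasFDerivAt.comp_hasDerivAt s hline
    have h1 : HasDerivAt (fun s : ℝ => (F (q + s • v)).1) ((D (q + s • v) v).1) s :=
      ((ContinuousLinearMap.fst ℝ ℝ ℝ).hasFDerivAt).comp_hasDerivAt s hFc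
    have h2 : HasDerivAt (fun s : ℝ => (F (q + s • v)).2) ((D (q + s • v) v).2) s :=
      ((ContinuousLinearMap.snd ℝ ℝ ℝ).hasFDerivAt).comp_hasDerivAt s hFc
    exact (h2.const_mul v.1).sub (h1.const_mul v.2)
  have hne : ∀ s ∈ (univ : Set ℝ), cr v (D (q + s • v) v) ≠ 0 := fun s _ =>
    cr_ne_zero F h (q + s • v) hv
  have := hasDerivWithinAt_forall_lt_or_forall_gt_of_forall_ne (convex_univ)
    (f := fun s : ℝ => cr v (F (q + s • v)))
    (f' := fun s : ℝ => cr v (D (q + s • v) v))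
    (fun s _ => (hder s).hasDerivWithinAt) (m := 0) hne
  have h0 : q + (0 : ℝ) • v = q := by simp
  rcases this with hneg | hpos
  · have a := hneg 0 (mem_univ _); have b := hneg t (mem_univ _)
    simp only [zero_smul, add_zero] at a
    exact mul_pos_of_neg_of_neg a b
  · have a := hpos 0 (mem_univ _); have b := hpos t (mem_univ _)
    simp only [zero_smul, add_zero] at a
    exact mul_pos a b

private lemma sphere_sign (F : ℝ × ℝ → ℝ × ℝ)
    (h : ∀ p : ℝ × ℝ, ∀ μ : ℝ, ∀ v : ℝ × ℝ, v ≠ 0 → fderiv ℝ F p v ≠ μ • v)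
    (q : ℝ × ℝ) {v w : ℝ × ℝ} (hv : v ≠ 0) (hw : w ≠ 0) :
    0 < cr v (fderiv ℝ F q v) * cr w (fderiv ℝ F q w) := by
  set D := fderiv ℝ F q with hD
  have hconn : IsConnected ({(0 : ℝ × ℝ)}ᶜ : Set (ℝ × ℝ)) := by
    apply isConnected_compl_singleton_of_one_lt_rank
    rw [rank_prod']
    have h1 : Module.rank ℝ ℝ = 1 := Module.rank_self ℝ
    rw [h1]
    norm_num
  have hcont : ContinuousOn (fun u : ℝ × ℝ => cr u (D u)) ({(0 : ℝ × ℝ)}ᶜ) := by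
    apply Continuous.continuousOn
    have hDc : Continuous fun u : ℝ × ℝ => D u := D.continuous
    unfold cr
    fun_prop
  have hiv := hconn.isPreconnected.intermediate_value (a := v) (b := w)
    (by simpa using hv) (by simpa using hw) hcont
  have hnz : ∀ u : ℝ × ℝ, u ≠ 0 → cr u (D u) ≠ 0 := fun u hu => cr_ne_zero F h q hu
  have hv0 := hnz v hv
  have hw0 := hnz w hw
  rcases lt_or_gt_of_ne hv0 with hvn | hvp
  · rcases lt_or_gt_of_ne hw0 with hwn | hwp
    · exact mul_pos_of_neg_of_neg hvn hwn
    · exfalso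
      obtain ⟨u, hu, hu0⟩ := hiv ⟨le_of_lt hvn, le_of_lt hwp⟩
      exact hnz u (by simpa using hu) hu0
  · rcases lt_or_gt_of_ne hw0 with hwn | hwp
    · exfalso
      have hiv' := hconn.isPreconnected.intermediate_value (a := w) (b := v)
        (by simpa using hw) (by simpa using hv) hcont
      obtain ⟨u, hu, hu0⟩ := hiv' ⟨le_of_lt hwn, le_of_lt hvp⟩
      exact hnz u (by simpa using hu) hu0
    · exact mul_pos hvp hwp

private lemma global_sign (F : ℝ × ℝ → ℝ × ℝ) (hF : Differentiable ℝ F)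
    (h : ∀ p : ℝ × ℝ, ∀ μ : ℝ, ∀ v : ℝ × ℝ, v ≠ 0 → fderiv ℝ F p v ≠ μ • v)
    (q q' : ℝ × ℝ) {v w : ℝ × ℝ} (hv : v ≠ 0) (hw : w ≠ 0) :
    0 < cr v (fderiv ℝ F q v) * cr w (fderiv ℝ F q' w) := by
  by_cases hqq : q' = q
  · subst hqq; exact sphere_sign F h _ hv hw
  · set u := q' - q with hu
    have hu0 : u ≠ 0 := sub_ne_zero.mpr hqq
    have h1 := sphere_sign F h q hv hu0
    have h2 := line_sign F hF h q hu0 1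
    have hq' : q + (1 : ℝ) • u = q' := by simp [hu]
    rw [hq'] at h2
    have h3 := sphere_sign F h q' hu0 hw
    nlinarith [h1, h2, h3, cr_ne_zero F h q hu0, cr_ne_zero F h q' hu0,
      sq_nonneg (cr u (fderiv ℝ F q u) * cr u (fderiv ℝ F q' u))]

/-- If `F : ℝ² → ℝ²` is differentiable and no `DF_p` has a real eigenvalue, then
`Spec(F²) ∩ [0, ∞) = ∅`: no derivative `D(F∘F)_p` has a nonnegative real eigenvalue. -/
theorem stmt10 (F : ℝ × ℝ → ℝ × ℝ) (hF : Differentiable ℝ F)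
    (h : ∀ p : ℝ × ℝ, ∀ μ : ℝ, ∀ v : ℝ × ℝ, v ≠ 0 → fderiv ℝ F p v ≠ μ • v) :
    ∀ p : ℝ × ℝ, ∀ μ : ℝ, 0 ≤ μ → ∀ v : ℝ × ℝ, v ≠ 0 →
      fderiv ℝ (F ∘ F) p v ≠ μ • v := by
  intro p μ hμ v hv hEq
  have hcomp : fderiv ℝ (F ∘ F) p = (fderiv ℝ F (F p)).comp (fderiv ℝ F p) :=
    fderiv_comp p (hF (F p)) (hF p)
  set w := fderiv ℝ F p v with hwdef
  have hABv : fderiv ℝ F (F p) w = μ • v := by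
    rw [hcomp] at hEq; exact hEq
  have hw0 : w ≠ 0 := by
    intro hw
    apply cr_ne_zero F h p hv
    rw [← hwdef, hw]
    simp [cr]
  have hsign := global_sign F hF h p (F p) hv hw0
  have hcrw : cr w (fderiv ℝ F (F p) w) = -(μ * cr v w) := by
    rw [hABv]; simp [cr]; ring
  rw [hcrw] at hsign
  have : cr v (fderiv ℝ F p v) = cr v w := by rw [← hwdef]
  rw [this] at hsign
  nlinarith [sq_nonneg (cr v w), hμ, hsign]
end

section
/- The map F(x,y) = ((αx − βy)(1 + x² + y²), (βx + αy)(1 + x² + y²)) with α² < 3β² has the property that DF_p has no real eigenvalues for any p ∈ ℝ²; consequently F ∘ F has at most one fixed point. -/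
private lemma step1 (s2 n N : ℝ) (hs : 0 ≤ s2) (hn : 0 ≤ n) (hN : 0 ≤ N)
    (h1 : N = s2 * n * (1 + n) ^ 2) (h2 : n = s2 * N * (1 + N) ^ 2) : n = N := by
  have hf : (N - n) * (1 + s2 * (1 + 2 * (n + N) + n ^ 2 + n * N + N ^ 2)) = 0 := by
    linear_combination h1 - h2
  have hpos : 0 < 1 + s2 * (1 + 2 * (n + N) + n ^ 2 + n * N + N ^ 2) := by
    have : 0 ≤ s2 * (1 + 2 * (n + N) + n ^ 2 + n * N + N ^ 2) := by
      apply mul_nonneg hs; nlinarith [sq_nonneg n, sq_nonneg N, mul_nonneg hn hN]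
    linarith
  rcases mul_eq_zero.mp hf with h | h
  · linarith
  · linarith

set_option maxHeartbeats 1000000 in
set_option maxRecDepth 4000 in
/-- For `F(x,y) = ((αx−βy)(1+x²+y²), (βx+αy)(1+x²+y²))` with `α² < 3β²`, no derivative
`DF_p` has a real eigenvalue, and consequently `F ∘ F` has at most one fixed point. -/
theorem stmt11 (α β : ℝ) (hαβ : α ^ 2 < 3 * β ^ 2)
    (F : ℝ × ℝ → ℝ × ℝ)
    (hFdef : F = fun p : ℝ × ℝ =>
      ((α * p.1 - β * p.2) * (1 + p.1 ^ 2 + p.2 ^ 2),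
       (β * p.1 + α * p.2) * (1 + p.1 ^ 2 + p.2 ^ 2))) :
    (∀ p : ℝ × ℝ, ∀ μ : ℝ, ∀ v : ℝ × ℝ, v ≠ 0 → fderiv ℝ F p v ≠ μ • v) ∧
    (∀ p q : ℝ × ℝ, F (F p) = p → F (F q) = q → p = q) := by
  have hb2 : 0 < β ^ 2 := by nlinarith [sq_nonneg α]
  constructor
  · -- no real eigenvalues
    rintro ⟨x, y⟩ μ v hv0 heq
    have hF2 : F = fun q : ℝ × ℝ =>
        ((α * q.1 - β * q.2) * (1 + q.1 * q.1 + q.2 * q.2),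
         (β * q.1 + α * q.2) * (1 + q.1 * q.1 + q.2 * q.2)) := by
      rw [hFdef]; funext q; simp only [Prod.mk.injEq]; constructor <;> ring
    have hx := hasFDerivAt_fst (𝕜 := ℝ) (p := ((x, y) : ℝ × ℝ)) (F := ℝ)
    have hy := hasFDerivAt_snd (𝕜 := ℝ) (p := ((x, y) : ℝ × ℝ)) (E := ℝ)
    have hd := (HasFDerivAt.prodMk (((hx.const_mul α).sub (hy.const_mul β)).mul
        (((hasFDerivAt_const (1:ℝ) ((x, y) : ℝ × ℝ)).add (hx.mul hx)).add (hy.mul hy)))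
      (((hx.const_mul β).add (hy.const_mul α)).mul
        (((hasFDerivAt_const (1:ℝ) ((x, y) : ℝ × ℝ)).add (hx.mul hx)).add (hy.mul hy))))
    change HasFDerivAt (fun q : ℝ × ℝ =>
        ((α * q.1 - β * q.2) * (1 + q.1 * q.1 + q.2 * q.2),
         (β * q.1 + α * q.2) * (1 + q.1 * q.1 + q.2 * q.2))) _ _ at hd
    rw [← hF2] at hd
    have hfv := congrArg (fun L => L v) hd.fderiv
    simp only [ContinuousLinearMap.smul_apply, ContinuousLinearMap.add_apply,
      ContinuousLinearMap.sub_apply, ContinuousLinearMap.prod_apply,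
      ContinuousLinearMap.coe_fst', ContinuousLinearMap.coe_snd',
      ContinuousLinearMap.zero_apply, smul_eq_mul] at hfv
    have hμ := heq.symm.trans hfv
    have e1 := congrArg Prod.fst hμ
    have e2 := congrArg Prod.snd hμ
    simp only [Prod.smul_fst, Prod.smul_snd, smul_eq_mul] at e1 e2
    obtain ⟨v1, v2⟩ := v
    simp only [Pi.add_apply, Pi.sub_apply, Pi.mul_apply] at e1 e2
    have f1 : (2 * x * (α * x - β * y) + α * (1 + x * x + y * y) - μ) * v1
        + (2 * y * (α * x - β * y) - β * (1 + x * x + y * y)) * v2 = 0 := by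
      linear_combination -e1
    have f2 : (2 * x * (β * x + α * y) + β * (1 + x * x + y * y)) * v1
        + (2 * y * (β * x + α * y) + α * (1 + x * x + y * y) - μ) * v2 = 0 := by
      linear_combination -e2
    have hv1v2 : v1 ≠ 0 ∨ v2 ≠ 0 := by
      by_contra h
      push_neg at h
      exact hv0 (by simp [h.1, h.2, Prod.ext_iff])
    have hK : (2 * x * (α * x - β * y) + α * (1 + x * x + y * y) - μ)
          * (2 * y * (β * x + α * y) + α * (1 + x * x + y * y) - μ)
        - (2 * y * (α * x - β * y) - β * (1 + x * x + y * y))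
          * (2 * x * (β * x + α * y) + β * (1 + x * x + y * y)) = 0 := by
      rcases hv1v2 with h | h
      · have h0 : ((2 * x * (α * x - β * y) + α * (1 + x * x + y * y) - μ)
              * (2 * y * (β * x + α * y) + α * (1 + x * x + y * y) - μ)
            - (2 * y * (α * x - β * y) - β * (1 + x * x + y * y))
              * (2 * x * (β * x + α * y) + β * (1 + x * x + y * y))) * v1 = 0 := by
          linear_combination (2 * y * (β * x + α * y) + α * (1 + x * x + y * y) - μ) * f1
            - (2 * y * (α * x - β * y) - β * (1 + x * x + y * y)) * f2
        exact (mul_eq_zero.mp h0).resolve_right h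
      · have h0 : ((2 * x * (α * x - β * y) + α * (1 + x * x + y * y) - μ)
              * (2 * y * (β * x + α * y) + α * (1 + x * x + y * y) - μ)
            - (2 * y * (α * x - β * y) - β * (1 + x * x + y * y))
              * (2 * x * (β * x + α * y) + β * (1 + x * x + y * y))) * v2 = 0 := by
          linear_combination (2 * x * (α * x - β * y) + α * (1 + x * x + y * y) - μ) * f2
            - (2 * x * (β * x + α * y) + β * (1 + x * x + y * y)) * f1
        exact (mul_eq_zero.mp h0).resolve_right h
    have hid : (2 * x * (α * x - β * y) + 2 * y * (β * x + α * y)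
          + 2 * α * (1 + x * x + y * y) - 2 * μ) ^ 2
        + 4 * (3 * β ^ 2 - α ^ 2) * (x ^ 2 + y ^ 2) ^ 2
        + 16 * β ^ 2 * (x ^ 2 + y ^ 2) + 4 * β ^ 2 = 0 := by
      linear_combination 4 * hK
    nlinarith [sq_nonneg (2 * x * (α * x - β * y) + 2 * y * (β * x + α * y)
        + 2 * α * (1 + x * x + y * y) - 2 * μ),
      mul_nonneg (by linarith : (0:ℝ) ≤ 3 * β ^ 2 - α ^ 2) (sq_nonneg (x ^ 2 + y ^ 2)),
      mul_nonneg (le_of_lt hb2) (by positivity : (0:ℝ) ≤ x ^ 2 + y ^ 2)]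
  · -- at most one fixed point of F ∘ F
    have key : ∀ p : ℝ × ℝ, F (F p) = p → p = 0 := by
      rintro ⟨x, y⟩ hp
      rw [hFdef] at hp
      obtain ⟨X, hX'⟩ : ∃ X, (α * x - β * y) * (1 + x ^ 2 + y ^ 2) = X := ⟨_, rfl⟩
      obtain ⟨Y, hY'⟩ : ∃ Y, (β * x + α * y) * (1 + x ^ 2 + y ^ 2) = Y := ⟨_, rfl⟩
      have hX : X = (α * x - β * y) * (1 + x ^ 2 + y ^ 2) := hX'.symm
      have hY : Y = (β * x + α * y) * (1 + x ^ 2 + y ^ 2) := hY'.symm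
      have hp' : ((α * X - β * Y) * (1 + X ^ 2 + Y ^ 2),
          (β * X + α * Y) * (1 + X ^ 2 + Y ^ 2)) = ((x : ℝ), y) := by
        rw [hX, hY]; exact hp
      have e1 : (α * X - β * Y) * (1 + X ^ 2 + Y ^ 2) = x := congrArg Prod.fst hp'
      have e2 : (β * X + α * Y) * (1 + X ^ 2 + Y ^ 2) = y := congrArg Prod.snd hp'
      have h1 : X ^ 2 + Y ^ 2
          = (α ^ 2 + β ^ 2) * (x ^ 2 + y ^ 2) * (1 + (x ^ 2 + y ^ 2)) ^ 2 := by
        rw [hX, hY]; ring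
      have h2 : x ^ 2 + y ^ 2
          = (α ^ 2 + β ^ 2) * (X ^ 2 + Y ^ 2) * (1 + (X ^ 2 + Y ^ 2)) ^ 2 := by
        linear_combination -(((α * X - β * Y) * (1 + X ^ 2 + Y ^ 2) + x) * e1)
          - ((β * X + α * Y) * (1 + X ^ 2 + Y ^ 2) + y) * e2
      have hEq : x ^ 2 + y ^ 2 = X ^ 2 + Y ^ 2 :=
        step1 (α ^ 2 + β ^ 2) (x ^ 2 + y ^ 2) (X ^ 2 + Y ^ 2) (by positivity)
          (by positivity) (by positivity) h1 h2
      by_cases hz : x ^ 2 + y ^ 2 = 0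
      · have hx2 : x ^ 2 = 0 := le_antisymm (by nlinarith [sq_nonneg y]) (sq_nonneg x)
        have hy2 : y ^ 2 = 0 := le_antisymm (by nlinarith [sq_nonneg x]) (sq_nonneg y)
        have hx0 : x = 0 := by
          have := sq_eq_zero_iff.mp hx2; exact this
        have hy0 : y = 0 := by
          have := sq_eq_zero_iff.mp hy2; exact this
        simp [hx0, hy0, Prod.ext_iff]
      · exfalso
        have hnn : x ^ 2 + y ^ 2
            = (α ^ 2 + β ^ 2) * (x ^ 2 + y ^ 2) * (1 + (x ^ 2 + y ^ 2)) ^ 2 :=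
          hEq.trans h1
        have hfac : (x ^ 2 + y ^ 2)
            * ((α ^ 2 + β ^ 2) * (1 + x ^ 2 + y ^ 2) ^ 2 - 1) = 0 := by
          linear_combination -hnn
        have hw : (α ^ 2 + β ^ 2) * (1 + x ^ 2 + y ^ 2) ^ 2 = 1 := by
          rcases mul_eq_zero.mp hfac with h | h
          · exact absurd h hz
          · linarith
        have A1 : ((α ^ 2 - β ^ 2) * x - 2 * α * β * y) * (1 + x ^ 2 + y ^ 2) ^ 2 = x := by
          linear_combination e1 + (α * X - β * Y) * hEq
            - (1 + x ^ 2 + y ^ 2) * α * hX + (1 + x ^ 2 + y ^ 2) * β * hY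
        have A2 : (2 * α * β * x + (α ^ 2 - β ^ 2) * y) * (1 + x ^ 2 + y ^ 2) ^ 2 = y := by
          linear_combination e2 + (β * X + α * Y) * hEq
            - (1 + x ^ 2 + y ^ 2) * β * hX - (1 + x ^ 2 + y ^ 2) * α * hY
        have B1 : 2 * β * (1 + x ^ 2 + y ^ 2) ^ 2 * (β * x + α * y) = 0 := by
          linear_combination x * hw - A1
        have B2 : 2 * β * (1 + x ^ 2 + y ^ 2) ^ 2 * (α * x - β * y) = 0 := by
          linear_combination A2 - y * hw
        have hfin : β * (x ^ 2 + y ^ 2) = 0 := by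
          linear_combination ((β * x + α * y) / 2) * B1 + ((α * x - β * y) / 2) * B2
            - β * (x ^ 2 + y ^ 2) * hw
        have hβ : β ≠ 0 := fun h => by rw [h] at hb2; simp at hb2
        exact hz ((mul_eq_zero.mp hfin).resolve_left hβ)
    intro p q hp hq
    rw [key p hp, key q hq]
end

section
/- There is no quadratic polynomial map F = (f, g) : ℝ² → ℝ², with f or g of degree exactly 2, such that DF_p has no real eigenvalues for every p ∈ ℝ². Equivalently: if f and g are real polynomials of degree at most 2 in (x,y) and the Jacobian matrix DF_p has non-real eigenvalues for all p, then f and g are affine (all degree-2 coefficients vanish). -/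
/-- A 2x2 real matrix with nonnegative discriminant has a real eigenvector. -/
lemma quad_eigen (A B C D : ℝ) (hd : 0 ≤ (A - D)^2 + 4*B*C) :
    ∃ μ : ℝ, ∃ v : ℝ × ℝ, v ≠ 0 ∧
      (A*v.1 + B*v.2, C*v.1 + D*v.2) = μ • v := by
  by_cases hB : B = 0
  · refine ⟨D, (0, 1), ?_, ?_⟩
    · simp [Prod.ext_iff]
    · simp [hB, Prod.ext_iff]
  · set s := Real.sqrt ((A - D)^2 + 4*B*C) with hs
    have hs2 : s^2 = (A - D)^2 + 4*B*C := Real.sq_sqrt hd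
    set μ := (A + D + s)/2 with hμ
    refine ⟨μ, (B, μ - A), ?_, ?_⟩
    · simp [Prod.ext_iff, hB]
    · have hchar : μ^2 - (A + D)*μ + (A*D - B*C) = 0 := by
        rw [hμ]; nlinarith [hs2]
      simp only [Prod.smul_mk, smul_eq_mul, Prod.mk.injEq]
      constructor
      · ring
      · nlinarith [hchar]

/-- There is no genuinely quadratic polynomial map `F = (f,g) : ℝ² → ℝ²` whose Jacobian
has non-real eigenvalues everywhere: if the Jacobian of `(f,g)` has no real eigenvalue at
any point, then all degree-2 coefficients vanish, i.e. `f` and `g` are affine. -/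
theorem stmt13 (a11 a12 a21 a22 b11 b12 b13 b21 b22 b23 : ℝ)
    (f g : ℝ × ℝ → ℝ)
    (hf : f = fun p : ℝ × ℝ =>
      a11 * p.1 + a12 * p.2 + b11 * p.1 ^ 2 + b12 * p.1 * p.2 + b13 * p.2 ^ 2)
    (hg : g = fun p : ℝ × ℝ =>
      a21 * p.1 + a22 * p.2 + b21 * p.1 ^ 2 + b22 * p.1 * p.2 + b23 * p.2 ^ 2)
    (h : ∀ p : ℝ × ℝ, ∀ μ : ℝ, ∀ v : ℝ × ℝ, v ≠ 0 →
      fderiv ℝ (fun q => (f q, g q)) p v ≠ μ • v) :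
    b11 = 0 ∧ b12 = 0 ∧ b13 = 0 ∧ b21 = 0 ∧ b22 = 0 ∧ b23 = 0 := by
  subst hf hg
  -- derivative formula
  have key : ∀ p v : ℝ × ℝ,
      fderiv ℝ (fun q : ℝ × ℝ =>
        (a11 * q.1 + a12 * q.2 + b11 * q.1 ^ 2 + b12 * q.1 * q.2 + b13 * q.2 ^ 2,
         a21 * q.1 + a22 * q.2 + b21 * q.1 ^ 2 + b22 * q.1 * q.2 + b23 * q.2 ^ 2)) p v =
        ((a11 + 2*b11*p.1 + b12*p.2) * v.1 + (a12 + b12*p.1 + 2*b13*p.2) * v.2,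
         (a21 + 2*b21*p.1 + b22*p.2) * v.1 + (a22 + b22*p.1 + 2*b23*p.2) * v.2) := by
    intro p v
    simp only [pow_two]
    have h1 : HasFDerivAt (fun q : ℝ × ℝ => q.1) (ContinuousLinearMap.fst ℝ ℝ ℝ) p :=
      hasFDerivAt_fst
    have h2 : HasFDerivAt (fun q : ℝ × ℝ => q.2) (ContinuousLinearMap.snd ℝ ℝ ℝ) p :=
      hasFDerivAt_snd
    have hF := ((((h1.const_mul a11).add (h2.const_mul a12)).add
        ((h1.mul h1).const_mul b11)).add ((h1.const_mul b12).mul h2)).add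
        ((h2.mul h2).const_mul b13)
    have hG := ((((h1.const_mul a21).add (h2.const_mul a22)).add
        ((h1.mul h1).const_mul b21)).add ((h1.const_mul b22).mul h2)).add
        ((h2.mul h2).const_mul b23)
    rw [HasFDerivAt.fderiv (f := fun q : ℝ × ℝ =>
        (a11 * q.1 + a12 * q.2 + b11 * (q.1 * q.1) + b12 * q.1 * q.2 + b13 * (q.2 * q.2),
         a21 * q.1 + a22 * q.2 + b21 * (q.1 * q.1) + b22 * q.1 * q.2 + b23 * (q.2 * q.2)))
      (HasFDerivAt.prodMk hF hG)]
    simp [Prod.ext_iff]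
    constructor <;> ring
  -- discriminant negative everywhere
  have disc : ∀ x y : ℝ,
      ((a11 + 2*b11*x + b12*y) - (a22 + b22*x + 2*b23*y))^2
        + 4*(a12 + b12*x + 2*b13*y)*(a21 + 2*b21*x + b22*y) < 0 := by
    intro x y
    by_contra hd
    push_neg at hd
    obtain ⟨μ, v, hv, heig⟩ := quad_eigen _ _ _ _ hd
    exact h (x, y) μ v hv (by rw [key (x, y) v]; exact heig)
  have hb12 : b12 = 0 := by
    by_contra hb
    have hd := disc (-a12/b12) 0
    have hB : a12 + b12 * (-a12/b12) + 2*b13*(0:ℝ) = 0 := by field_simp; ring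
    rw [hB] at hd
    nlinarith [sq_nonneg ((a11 + 2*b11*(-a12/b12) + b12*0) - (a22 + b22*(-a12/b12) + 2*b23*0))]
  have hb13 : b13 = 0 := by
    by_contra hb
    have hd := disc 0 (-a12/(2*b13))
    have hB : a12 + b12 * (0:ℝ) + 2*b13*(-a12/(2*b13)) = 0 := by field_simp; ring
    rw [hB] at hd
    nlinarith [sq_nonneg ((a11 + 2*b11*0 + b12*(-a12/(2*b13))) - (a22 + b22*0 + 2*b23*(-a12/(2*b13))))]
  have hb21 : b21 = 0 := by
    by_contra hb
    have hd := disc (-a21/(2*b21)) 0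
    have hC : a21 + 2*b21 * (-a21/(2*b21)) + b22*(0:ℝ) = 0 := by field_simp; ring
    rw [hC] at hd
    nlinarith [sq_nonneg ((a11 + 2*b11*(-a21/(2*b21)) + b12*0) - (a22 + b22*(-a21/(2*b21)) + 2*b23*0))]
  have hb22 : b22 = 0 := by
    by_contra hb
    have hd := disc 0 (-a21/b22)
    have hC : a21 + 2*b21 * (0:ℝ) + b22*(-a21/b22) = 0 := by field_simp; ring
    rw [hC] at hd
    nlinarith [sq_nonneg ((a11 + 2*b11*0 + b12*(-a21/b22)) - (a22 + b22*0 + 2*b23*(-a21/b22)))]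
  subst hb12 hb13 hb21 hb22
  have h0 := disc 0 0
  simp only [mul_zero, add_zero, zero_mul] at h0
  have hK : 0 < -(4*a12*a21) := by nlinarith [sq_nonneg (a11 - a22)]
  set K := -(4*a12*a21) with hKdef
  have hsK : (Real.sqrt K)^2 = K := Real.sq_sqrt hK.le
  have hb11 : b11 = 0 := by
    by_contra hb
    have hd := disc ((Real.sqrt K - (a11 - a22))/(2*b11)) 0
    have hAD : (a11 + 2*b11*((Real.sqrt K - (a11 - a22))/(2*b11)) + 0*(0:ℝ))
        - (a22 + 0*((Real.sqrt K - (a11 - a22))/(2*b11)) + 2*b23*(0:ℝ)) = Real.sqrt K := by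
      field_simp; ring
    rw [hAD] at hd
    nlinarith [hd, hsK]
  have hb23 : b23 = 0 := by
    by_contra hb
    have hd := disc 0 (((a11 - a22) - Real.sqrt K)/(2*b23))
    have hAD : (a11 + 2*b11*(0:ℝ) + 0*(((a11 - a22) - Real.sqrt K)/(2*b23)))
        - (a22 + 0*(0:ℝ) + 2*b23*(((a11 - a22) - Real.sqrt K)/(2*b23))) = Real.sqrt K := by
      field_simp; ring
    rw [hAD] at hd
    nlinarith [hd, hsK]
  exact ⟨hb11, rfl, rfl, rfl, rfl, hb23⟩
end

section
/- If f, g : ℝ² → ℝ are quadratic polynomials as above and for all p the Jacobian of (f,g) has no real eigenvalues, then ∂f/∂y and ∂g/∂x never vanish; since these are affine functions of (x,y), they must be constant, forcing b₁₂ = b₁₃ = b₂₁ = b₂₂ = 0. -/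
/-- If the Jacobian of the quadratic map `(f,g)` has no real eigenvalues anywhere, i.e.
`(∂f/∂x − ∂g/∂y)² + 4(∂f/∂y)(∂g/∂x) < 0` at every point, then the affine partials
`∂f/∂y` and `∂g/∂x` never vanish, hence are constant: `b₁₂ = b₁₃ = b₂₁ = b₂₂ = 0`. -/
theorem stmt14 (a11 a12 a21 a22 b11 b12 b13 b21 b22 b23 : ℝ)
    (h : ∀ x y : ℝ,
      ((a11 + 2 * b11 * x + b12 * y) - (a22 + b22 * x + 2 * b23 * y)) ^ 2 +
        4 * (a12 + b12 * x + 2 * b13 * y) * (a21 + 2 * b21 * x + b22 * y) < 0) :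
    (∀ x y : ℝ, a12 + b12 * x + 2 * b13 * y ≠ 0) ∧
    (∀ x y : ℝ, a21 + 2 * b21 * x + b22 * y ≠ 0) ∧
    b12 = 0 ∧ b13 = 0 ∧ b21 = 0 ∧ b22 = 0 := by
  have hF : ∀ x y : ℝ, a12 + b12 * x + 2 * b13 * y ≠ 0 := by
    intro x y hz
    have := h x y
    rw [hz] at this
    nlinarith [sq_nonneg ((a11 + 2 * b11 * x + b12 * y) - (a22 + b22 * x + 2 * b23 * y))]
  have hG : ∀ x y : ℝ, a21 + 2 * b21 * x + b22 * y ≠ 0 := by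
    intro x y hz
    have := h x y
    rw [hz] at this
    nlinarith [sq_nonneg ((a11 + 2 * b11 * x + b12 * y) - (a22 + b22 * x + 2 * b23 * y))]
  refine ⟨hF, hG, ?_, ?_, ?_, ?_⟩
  · by_contra hb
    exact hF (-a12 / b12) 0 (by field_simp; ring)
  · by_contra hb
    exact hF 0 (-a12 / (2 * b13)) (by field_simp; ring)
  · by_contra hb
    exact hG (-a21 / (2 * b21)) 0 (by field_simp; ring)
  · by_contra hb
    exact hG 0 (-a21 / b22) (by field_simp; ring)
end
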